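/- Under the setup of the empirical-maximization overestimation theorem, if equality E_B[Ĵ_B(π_B)] = E_B[J(π_B)] holds, then for μ-almost every pair of datasets B, B', the empirical maximizer on B also maximizes the empirical objective on B', i.e., Ĵ_{B'}(π_B) = max_{π ∈ H} Ĵ_{B'}(π). -/
import Mathlib


open MeasureTheory

/-- Equality case of the overestimation theorem: under the same setup, if
`E_B[Ĵ B (πB B)] = E_B[J (πB B)]` then for almost every pair of datasets
`(B, B')`, the empirical maximizer on `B` also maximizes the empirical
objective on `B'`. -/
theorem stmt_4 {D : Type*} [MeasurableSpace D] (μ : Measure D) [IsProbabilityMeasure μ]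
    {H : Type*} (Jhat : D → H → ℝ) (J : H → ℝ) (πB : D → H)
    (hmax : ∀ B : D, ∀ π : H, Jhat B π ≤ Jhat B (πB B))
    (hunbiased : ∫ B, J (πB B) ∂μ = ∫ B, ∫ B', Jhat B' (πB B) ∂μ ∂μ)
    (hint1 : Integrable (fun B => Jhat B (πB B)) μ)
    (hint2 : Integrable (fun B => J (πB B)) μ)
    (hint3 : Integrable (fun p : D × D => Jhat p.2 (πB p.1)) (μ.prod μ))
    (heq : ∫ B, Jhat B (πB B) ∂μ = ∫ B, J (πB B) ∂μ) :
    ∀ᵐ p : D × D ∂(μ.prod μ), ∀ π : H, Jhat p.2 π ≤ Jhat p.2 (πB p.1) := by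
  set g : D × D → ℝ := fun p => Jhat p.2 (πB p.2) - Jhat p.2 (πB p.1) with hg
  have hmap : (μ.prod μ).map Prod.snd = μ := by
    simp [Measure.map_snd_prod]
  have hmeas : AEStronglyMeasurable (fun B => Jhat B (πB B)) ((μ.prod μ).map Prod.snd) := by
    rw [hmap]; exact hint1.aestronglyMeasurable
  have hintf : Integrable (fun p : D × D => Jhat p.2 (πB p.2)) (μ.prod μ) := by
    have := (integrable_map_measure hmeas measurable_snd.aemeasurable).mp (by rwa [hmap])
    exact this
  have hintg : Integrable g (μ.prod μ) := hintf.sub hint3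
  have hI1 : ∫ p : D × D, Jhat p.2 (πB p.2) ∂(μ.prod μ) = ∫ B, Jhat B (πB B) ∂μ := by
    have := integral_map measurable_snd.aemeasurable hmeas
    rw [hmap] at this
    exact this.symm
  have hI2 : ∫ p : D × D, Jhat p.2 (πB p.1) ∂(μ.prod μ) = ∫ B, ∫ B', Jhat B' (πB B) ∂μ ∂μ := by
    rw [integral_prod _ hint3]
  have hzero : ∫ p, g p ∂(μ.prod μ) = 0 := by
    rw [hg]
    rw [integral_sub hintf hint3, hI1, hI2, heq, hunbiased, sub_self]
  have hnn : 0 ≤ᵐ[μ.prod μ] g :=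
    Filter.Eventually.of_forall fun p => sub_nonneg.2 (hmax p.2 (πB p.1))
  have hae : g =ᵐ[μ.prod μ] 0 :=
    (integral_eq_zero_iff_of_nonneg_ae hnn hintg).mp hzero
  filter_upwards [hae] with p hp π
  have : Jhat p.2 (πB p.2) = Jhat p.2 (πB p.1) := by
    have := sub_eq_zero.mp hp
    linarith [sub_eq_zero.mp (hp : g p = 0)]
  calc Jhat p.2 π ≤ Jhat p.2 (πB p.2) := hmax p.2 π
    _ = Jhat p.2 (πB p.1) := this
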